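/- A crown on n ≥ 4 vertices (a cycle C_n with one semi-edge attached at each vertex) has a C4-quotient 2-factor if and only if n is even. -/

import Mathlib

/-- The possible "ends" of an edge in a pregraph: an ordinary edge (or loop)
with two endpoints, or a semi-edge with a single endpoint. -/
inductive PEnds (V : Type) where
  | edge : V → V → PEnds V
  | semi : V → PEnds V
  deriving DecidableEq

/-- A finite pregraph: a multigraph that may contain loops, parallel edges and
semi-edges.  Edges are abstract and carry their endpoints via `ends`. -/
structure Pregraph where
  V : Type
  E : Type
  [fintypeV : Fintype V]
  [decEqV : DecidableEq V]
  [fintypeE : Fintype E]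
  [decEqE : DecidableEq E]
  ends : E → PEnds V

attribute [instance] Pregraph.fintypeV Pregraph.decEqV Pregraph.fintypeE Pregraph.decEqE

namespace Pregraph

/-- The number of end-points that edge `e` has at the vertex `v`
(a loop at `v` counts twice, a semi-edge once). -/
def endCount (P : Pregraph) (v : P.V) (e : P.E) : ℕ :=
  match P.ends e with
  | .edge a b => (if a = v then 1 else 0) + (if b = v then 1 else 0)
  | .semi a => if a = v then 1 else 0

/-- The degree of a vertex: loops count 2, semi-edges count 1. -/
def degree (P : Pregraph) (v : P.V) : ℕ := ∑ e : P.E, P.endCount v e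

open Classical in
/-- The degree of a vertex inside a set `F` of edges. -/
noncomputable def degIn (P : Pregraph) (F : Set P.E) (v : P.V) : ℕ :=
  ∑ e : P.E, if e ∈ F then P.endCount v e else 0

/-- `e` is a proper edge with endpoints `a` and `b`. -/
def joins (P : Pregraph) (e : P.E) (a b : P.V) : Prop :=
  P.ends e = .edge a b ∨ P.ends e = .edge b a

/-- The edge `e` is incident to the vertex `v`. -/
def incident (P : Pregraph) (e : P.E) (v : P.V) : Prop :=
  match P.ends e with
  | .edge a b => a = v ∨ b = v
  | .semi a => a = v

/-- Adjacency via a proper edge. -/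
def Adj (P : Pregraph) (u w : P.V) : Prop := ∃ e, P.joins e u w

/-- Connectedness of a pregraph. -/
def Connected (P : Pregraph) : Prop := ∀ u w : P.V, Relation.ReflTransGen P.Adj u w

/-- A cubic pregraph: connected and every vertex has degree 3. -/
def Cubic (P : Pregraph) : Prop := P.Connected ∧ ∀ v, P.degree v = 3

/-- The edge `e` has at least one endpoint in the vertex set `C`. -/
def touches (P : Pregraph) (e : P.E) (C : Set P.V) : Prop :=
  match P.ends e with
  | .edge a b => a ∈ C ∨ b ∈ C
  | .semi a => a ∈ C

/-- `C` is a component of the edge set `F` of type `q₁` : a 4-cycle. -/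
def IsQ1Comp (P : Pregraph) (F : Set P.E) (C : Set P.V) : Prop :=
  ∃ a b c d : P.V, a ≠ b ∧ a ≠ c ∧ a ≠ d ∧ b ≠ c ∧ b ≠ d ∧ c ≠ d ∧
    C = {a, b, c, d} ∧
    ∃ e1 e2 e3 e4 : P.E, e1 ≠ e2 ∧ e1 ≠ e3 ∧ e1 ≠ e4 ∧ e2 ≠ e3 ∧ e2 ≠ e4 ∧ e3 ≠ e4 ∧
      {e ∈ F | P.touches e C} = {e1, e2, e3, e4} ∧
      P.joins e1 a b ∧ P.joins e2 b c ∧ P.joins e3 c d ∧ P.joins e4 d a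

/-- `C` is a component of the edge set `F` of type `q₂` : a digon. -/
def IsQ2Comp (P : Pregraph) (F : Set P.E) (C : Set P.V) : Prop :=
  ∃ a b : P.V, a ≠ b ∧ C = {a, b} ∧
    ∃ e1 e2 : P.E, e1 ≠ e2 ∧ {e ∈ F | P.touches e C} = {e1, e2} ∧
      P.joins e1 a b ∧ P.joins e2 a b

/-- `C` is a component of the edge set `F` of type `q₃` : an edge together with
a semi-edge at each endpoint. -/
def IsQ3Comp (P : Pregraph) (F : Set P.E) (C : Set P.V) : Prop :=
  ∃ a b : P.V, a ≠ b ∧ C = {a, b} ∧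
    ∃ e1 e2 e3 : P.E, e1 ≠ e2 ∧ e1 ≠ e3 ∧ e2 ≠ e3 ∧
      {e ∈ F | P.touches e C} = {e1, e2, e3} ∧
      P.joins e1 a b ∧ P.ends e2 = .semi a ∧ P.ends e3 = .semi b

/-- `C` is a component of the edge set `F` of type `q₄` : a single vertex with
two semi-edges. -/
def IsQ4Comp (P : Pregraph) (F : Set P.E) (C : Set P.V) : Prop :=
  ∃ a : P.V, C = {a} ∧
    ∃ e1 e2 : P.E, e1 ≠ e2 ∧ {e ∈ F | P.touches e C} = {e1, e2} ∧
      P.ends e1 = .semi a ∧ P.ends e2 = .semi a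

/-- `C` is a component of `F` which is a quotient of `C₄`. -/
def IsCQComp (P : Pregraph) (F : Set P.E) (C : Set P.V) : Prop :=
  P.IsQ1Comp F C ∨ P.IsQ2Comp F C ∨ P.IsQ3Comp F C ∨ P.IsQ4Comp F C

/-- `F` is a `C₄`-quotient 2-factor with component partition `Ps`. -/
def IsCQFactorWith (P : Pregraph) (F : Set P.E) (Ps : Set (Set P.V)) : Prop :=
  (∀ C ∈ Ps, P.IsCQComp F C) ∧
  (∀ v : P.V, ∃ C ∈ Ps, v ∈ C) ∧
  (∀ C ∈ Ps, ∀ D ∈ Ps, C ≠ D → Disjoint C D)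

/-- `F` is a `C₄`-quotient 2-factor: a spanning subgraph in which every vertex has
degree 2 and every component is a quotient of `C₄`. -/
def IsCQFactor (P : Pregraph) (F : Set P.E) : Prop := ∃ Ps, P.IsCQFactorWith F Ps

/-- The pregraph has a `C₄`-quotient 2-factor. -/
def HasCQFactor (P : Pregraph) : Prop := ∃ F, P.IsCQFactor F

/-- Compatibility of ends under a vertex map (edges are unordered). -/
def endsRel {V W : Type} (σ : V → W) : PEnds V → PEnds W → Prop
  | .edge a b, x => x = .edge (σ a) (σ b) ∨ x = .edge (σ b) (σ a)
  | .semi a, x => x = .semi (σ a)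

/-- An isomorphism of pregraphs. -/
structure Iso (P Q : Pregraph) where
  vmap : P.V ≃ Q.V
  emap : P.E ≃ Q.E
  compat : ∀ e, endsRel vmap (P.ends e) (Q.ends (emap e))

/-- Two edge sets (e.g. two 2-factors) of `P` are isomorphic if some automorphism
of `P` maps one onto the other. -/
def FactorIso (P : Pregraph) (F1 F2 : Set P.E) : Prop :=
  ∃ φ : Iso P P, ∀ e, e ∈ F1 ↔ φ.emap e ∈ F2

/-- Adjacency in the ladder graph `K₂ × Pₙ` on `Fin n × Fin 2`. -/
def ladderAdj (n : ℕ) (p q : Fin n × Fin 2) : Prop :=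
  (p.1 = q.1 ∧ p.2 ≠ q.2) ∨ (p.2 = q.2 ∧ ((p.1 : ℕ) + 1 = q.1 ∨ (q.1 : ℕ) + 1 = p.1))

/-- The subgraph of `P` with vertex set `S` and edge set `F` is isomorphic to the
ladder `K₂ × Pₙ` for some `n ≥ 2`. -/
def IsLadder (P : Pregraph) (S : Set P.V) (F : Set P.E) : Prop :=
  ∃ n : ℕ, 2 ≤ n ∧ ∃ f : Fin n × Fin 2 → P.V, Function.Injective f ∧
    S = Set.range f ∧
    (∀ e ∈ F, ∃ p q, ladderAdj n p q ∧ P.joins e (f p) (f q)) ∧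
    (∀ p q, ladderAdj n p q → ∃! e, e ∈ F ∧ P.joins e (f p) (f q))

/-- A ladder of `P`: a maximal subgraph isomorphic to `K₂ × Pₙ`, `n ≥ 2`. -/
def IsMaxLadder (P : Pregraph) (S : Set P.V) (F : Set P.E) : Prop :=
  P.IsLadder S F ∧
  ∀ S' F', P.IsLadder S' F' → S ⊆ S' → F ⊆ F' → S = S' ∧ F = F'

/-- A digon: two distinct vertices joined by two parallel edges. -/
def IsDigonPair (P : Pregraph) (a b : P.V) : Prop :=
  a ≠ b ∧ ∃ e1 e2 : P.E, e1 ≠ e2 ∧ P.joins e1 a b ∧ P.joins e2 a b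

end Pregraph

/-- The crown on `n` vertices: the cycle `Cₙ` with one semi-edge attached at each
vertex.  `Sum.inl i` is the cycle edge from `i` to `i + 1`, `Sum.inr i` is the
semi-edge at `i`. -/
def crown (n : ℕ) [NeZero n] : Pregraph where
  V := Fin n
  E := Fin n ⊕ Fin n
  ends := fun e =>
    match e with
    | .inl i => .edge i (i + 1)
    | .inr i => .semi i

namespace CrownAux

variable {n : ℕ} [NeZero n]

lemma val_succ (i : Fin n) (h : (i : ℕ) + 1 < n) : ((i + 1 : Fin n) : ℕ) = (i : ℕ) + 1 := by
  have h1 : ((1 : Fin n) : ℕ) = 1 := by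
    rw [Fin.val_one', Nat.mod_eq_of_lt (by omega)]
  rw [Fin.val_add, h1, Nat.mod_eq_of_lt h]

lemma even_succ_lt (hn : 4 ≤ n) (hev : Even n) (i : Fin n) (hi : Even (i : ℕ)) :
    (i : ℕ) + 1 < n := by
  have := i.isLt
  rw [Nat.even_iff] at hev hi
  omega

/-- For even `i` (and even `n`), the value of `i+1` is `i+1`. -/
lemma key (hn : 4 ≤ n) (hev : Even n) (i : Fin n) (hi : Even (i : ℕ)) :
    ((i + 1 : Fin n) : ℕ) = (i : ℕ) + 1 :=
  val_succ i (even_succ_lt hn hev i hi)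

lemma semi_eq (a : Fin n) (e : (crown n).E) (h : (crown n).ends e = .semi a) :
    e = Sum.inr a := by
  rcases e with i | i
  · exact absurd h (by intro h; have h' : PEnds.edge (V := Fin n) i (i + 1) = PEnds.semi a := h; cases h')
  · have h' : PEnds.semi (V := Fin n) i = PEnds.semi a := h
    injection h' with h''
    rw [h'']

end CrownAux

/-- A crown on `n ≥ 4` vertices has a `C₄`-quotient 2-factor if and
only if `n` is even. -/
theorem crown_hasCQFactor_iff (n : ℕ) [NeZero n] (hn : 4 ≤ n) :
    (crown n).HasCQFactor ↔ Even n := by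
  classical
  constructor
  · -- forward direction: a factor forces `n` even
    rintro ⟨F, Ps, hcomp, hcover, hdisj⟩
    -- every component has even cardinality
    have hev : ∀ C ∈ Ps, Even C.ncard := by
      intro C hC
      rcases hcomp C hC with h | h | h | h
      · obtain ⟨a, b, c, d, hab, hac, had, hbc, hbd, hcd, hCeq, -⟩ := h
        rw [hCeq]
        have h4 : ({a, b, c, d} : Set (Fin n)).ncard = 4 := by
          change ({a, b, c, d} : Set (crown n).V).ncard = 4
          rw [Set.ncard_insert_of_notMem (by simp [hab, hac, had]),
              Set.ncard_insert_of_notMem (by simp [hbc, hbd]),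
              Set.ncard_pair hcd]
        rw [show ({a, b, c, d} : Set (crown n).V).ncard = 4 from h4]; exact ⟨2, rfl⟩
      · obtain ⟨a, b, hab, hCeq, -⟩ := h
        rw [hCeq, Set.ncard_pair hab]; exact ⟨1, rfl⟩
      · obtain ⟨a, b, hab, hCeq, -⟩ := h
        rw [hCeq, Set.ncard_pair hab]; exact ⟨1, rfl⟩
      · obtain ⟨a, hCeq, e1, e2, hne, hset, h1, h2⟩ := h
        exact absurd ((CrownAux.semi_eq a e1 h1).trans (CrownAux.semi_eq a e2 h2).symm) hne
    have hfin : Ps.Finite := Set.toFinite Ps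
    have hbu : (Finset.univ : Finset (Fin n)) =
        hfin.toFinset.biUnion (fun C => (Set.toFinite C).toFinset) := by
      ext v
      simp only [Finset.mem_univ, true_iff, Finset.mem_biUnion, Set.Finite.mem_toFinset]
      obtain ⟨C, hC, hv⟩ := hcover v
      exact Finset.mem_biUnion.mpr ⟨C, hfin.mem_toFinset.mpr hC, (Set.toFinite C).mem_toFinset.mpr hv⟩
    have hdisj' : ∀ C ∈ hfin.toFinset, ∀ D ∈ hfin.toFinset, C ≠ D →
        Disjoint ((Set.toFinite C).toFinset) ((Set.toFinite D).toFinset) := by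
      intro C hC D hD hCD
      rw [Finset.disjoint_left]
      intro x hx hx'
      rw [Set.Finite.mem_toFinset] at hx hx'
      exact Set.disjoint_left.mp
        (hdisj C (hfin.mem_toFinset.mp hC) D (hfin.mem_toFinset.mp hD) hCD) hx hx'
    have hcard : Even (Finset.univ : Finset (Fin n)).card := by
      have hc := Finset.card_biUnion hdisj'
      rw [hbu]; change Even (Finset.card (hfin.toFinset.biUnion fun C => (Set.toFinite C).toFinset)); rw [hc]
      apply Finset.even_sum
      intro C hC
      rw [← Set.ncard_eq_toFinset_card]
      exact hev C (hfin.mem_toFinset.mp hC)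
    simpa using hcard
  · -- backward direction: construct the factor explicitly
    intro hevn
    set F : Set ((crown n).E) :=
      fun e => Sum.elim (fun i : Fin n => Even (i : ℕ)) (fun _ => True) e with hF
    set Ps : Set (Set (Fin n)) :=
      {C | ∃ i : Fin n, Even (i : ℕ) ∧ C = {i, i + 1}} with hPs
    have keyn := CrownAux.key (n := n) hn hevn
    have hne1 : ∀ i : Fin n, Even (i : ℕ) → i ≠ i + 1 := by
      intro i hi h
      have := congrArg Fin.val h
      rw [keyn i hi] at this
      omega
    refine ⟨F, Ps, ?_, ?_, ?_⟩
    · -- each element of Ps is a Q3 component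
      rintro C ⟨i, hi, rfl⟩
      right; right; left
      refine ⟨i, i + 1, hne1 i hi, rfl,
        Sum.inl i, Sum.inr i, Sum.inr (i + 1), Sum.inl_ne_inr, Sum.inl_ne_inr,
        fun h => hne1 i hi (Sum.inr.inj h), ?_, Or.inl rfl, rfl, rfl⟩
      ext e
      constructor
      · rintro ⟨heF, htouch⟩
        rcases e with j | j
        · have hj : Even (j : ℕ) := heF
          have ht : j ∈ ({i, i + 1} : Set (Fin n)) ∨ j + 1 ∈ ({i, i + 1} : Set (Fin n)) :=
            htouch
          rcases ht with h | h
          · rcases h with rfl | h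
            · exact Or.inl rfl
            · have hj2 : j = i + 1 := h
              exfalso
              have := congrArg Fin.val hj2
              rw [keyn i hi] at this
              rw [Nat.even_iff] at hj hi
              omega
          · rcases h with h | h
            · have hj3 : j + 1 = i := h
              exfalso
              have := congrArg Fin.val hj3
              rw [keyn j hj] at this
              rw [Nat.even_iff] at hj hi
              omega
            · have hj4 : j + 1 = i + 1 := h
              have : j = i := add_right_cancel hj4
              rw [this]; exact Or.inl rfl
        · have ht : j ∈ ({i, i + 1} : Set (Fin n)) := htouch
          rcases ht with rfl | hj2
          · exact Or.inr (Or.inl rfl)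
          · have hj2' : j = i + 1 := hj2
            rw [hj2']
            exact Or.inr (Or.inr rfl)
      · rintro (rfl | rfl | rfl)
        · exact ⟨hi, Or.inl (Or.inl rfl)⟩
        · exact ⟨trivial, Or.inl rfl⟩
        · exact ⟨trivial, Or.inr rfl⟩
    · -- covering
      intro v
      obtain ⟨v, rfl⟩ : ∃ w : Fin n, w = v := ⟨v, rfl⟩
      by_cases hv : Even (v : ℕ)
      · exact ⟨{v, v + 1}, ⟨v, hv, rfl⟩, Or.inl rfl⟩
      · have hv1 : 1 ≤ (v : ℕ) := by
          rcases Nat.eq_zero_or_pos (v : ℕ) with h | h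
          · exact absurd (by rw [h]; exact Even.zero) hv
          · exact h
        have hvlt := v.isLt
        set w : Fin n := ⟨(v : ℕ) - 1, by omega⟩ with hwdef
        have hw : Even (w : ℕ) := by
          rw [Nat.even_iff]
          rw [Nat.not_even_iff] at hv
          show ((v : ℕ) - 1) % 2 = 0
          omega
        have hw1 : w + 1 = v := by
          apply Fin.val_injective
          rw [keyn _ hw]
          show (v : ℕ) - 1 + 1 = (v : ℕ)
          omega
        refine ⟨{w, w + 1}, ⟨w, hw, rfl⟩, ?_⟩
        rw [hw1]
        exact Or.inr rfl
    · -- disjointness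
      rintro C ⟨i, hi, rfl⟩ D ⟨j, hj, rfl⟩ hne
      refine Set.disjoint_left.mpr ?_
      intro x hx hx'
      have hij : i ≠ j := by rintro rfl; exact hne rfl
      rcases hx with rfl | hx
      · rcases hx' with h | h
        · exact hij h
        · rw [Set.mem_singleton_iff] at h
          have := congrArg Fin.val h
          rw [keyn j hj] at this
          rw [Nat.even_iff] at hi hj
          omega
      · rw [Set.mem_singleton_iff] at hx
        rcases hx' with rfl | h
        · have := congrArg Fin.val hx
          rw [keyn i hi] at this
          rw [Nat.even_iff] at hi hj
          omega
        · rw [Set.mem_singleton_iff] at h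
          have : i + 1 = j + 1 := by rw [← hx, h]
          exact hij (add_right_cancel this)
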